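/- Let h be an orientation-preserving homeomorphism of S¹, let a and b be two distinct fixed points of h, and suppose that the open arc J traversed counterclockwise from a to b is nonempty and contains no fixed points of h. Then h(J) = J, and exactly one of the following holds: for every p ∈ J one has hⁿ(p) → b and h⁻ⁿ(p) → a as n → ∞, or for every p ∈ J one has hⁿ(p) → a and h⁻ⁿ(p) → b as n → ∞. -/

import Mathlib

open Filter Topology

/-- `(a,b,c)` is a positively oriented triple on the circle `ℝ/ℤ`:
`b` lies in the open arc traversed counterclockwise from `a` to `c`. -/
def PosOriented (a b c : UnitAddCircle) : Prop :=
  ∃ x y z : ℝ, (x : UnitAddCircle) = a ∧ (y : UnitAddCircle) = b ∧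
    (z : UnitAddCircle) = c ∧ x < y ∧ y < z ∧ z < x + 1

/-- Negatively oriented triple. -/
def NegOriented (a b c : UnitAddCircle) : Prop := PosOriented c b a

/-- The open arc traversed counterclockwise from `a` to `b`. -/
def Arc (a b : UnitAddCircle) : Set UnitAddCircle := {x | PosOriented a x b}

/-- A homeomorphism of the circle is orientation-preserving if it sends every
positively oriented triple to a positively oriented triple. -/
def OrientationPreserving (h : UnitAddCircle ≃ₜ UnitAddCircle) : Prop :=
  ∀ a b c : UnitAddCircle, PosOriented a b c → PosOriented (h a) (h b) (h c)

/-- The fixed point set of a circle homeomorphism. -/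
def FixSet (h : UnitAddCircle ≃ₜ UnitAddCircle) : Set UnitAddCircle := {x | h x = x}

/-- `x` is an attracting fixed point (a sink) of `h`. -/
def IsAttractingFix (h : UnitAddCircle ≃ₜ UnitAddCircle) (x : UnitAddCircle) : Prop :=
  h x = x ∧ ∃ U : Set UnitAddCircle, IsOpen U ∧ x ∈ U ∧
    ∀ y ∈ U, Tendsto (fun n => (⇑h)^[n] y) atTop (𝓝 x)

/-- `x` is a repelling fixed point (a source) of `h`. -/
def IsRepellingFix (h : UnitAddCircle ≃ₜ UnitAddCircle) (x : UnitAddCircle) : Prop :=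
  IsAttractingFix h.symm x

/-- A map of the circle is monotone on a set `A` if it sends no positively oriented
triple of points of `A` to a negatively oriented one, and vice versa. -/
def MonotoneCircOn (f : UnitAddCircle → UnitAddCircle) (A : Set UnitAddCircle) : Prop :=
  ∀ a ∈ A, ∀ b ∈ A, ∀ c ∈ A,
    (PosOriented a b c → ¬ NegOriented (f a) (f b) (f c)) ∧
    (NegOriented a b c → ¬ PosOriented (f a) (f b) (f c))

/-! ### Auxiliary machinery: the "counterclockwise distance" on the circle -/

noncomputable def dd (u v : UnitAddCircle) : ℝ := (AddCircle.equivIco 1 0 (v - u) : ℝ)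

lemma dd_mem (u v : UnitAddCircle) : dd u v ∈ Set.Ico (0:ℝ) 1 := by
  have := (AddCircle.equivIco 1 0 (v - u)).2
  simpa [dd] using this

lemma coe_dd (u v : UnitAddCircle) : ((dd u v : ℝ) : UnitAddCircle) = v - u :=
  (AddCircle.equivIco 1 0).symm_apply_apply (v - u)

lemma dd_eq {u v : UnitAddCircle} {t : ℝ} (ht : t ∈ Set.Ico (0:ℝ) 1)
    (hc : (t : UnitAddCircle) = v - u) : dd u v = t :=
  (AddCircle.coe_eq_coe_iff_of_mem_Ico (p := (1:ℝ)) (a := 0)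
    (by simpa using dd_mem u v) (by simpa using ht)).mp ((coe_dd u v).trans hc.symm)

lemma dd_self (u : UnitAddCircle) : dd u u = 0 := dd_eq (by norm_num) (by simp)

lemma dd_pos_of_ne {u v : UnitAddCircle} (h : u ≠ v) : 0 < dd u v := by
  rcases (dd_mem u v).1.lt_or_eq with h1 | h1
  · exact h1
  · exfalso; apply h
    have := coe_dd u v
    rw [← h1] at this
    simp at this
    exact (sub_eq_zero.mp this.symm).symm

lemma eq_add_dd (u v : UnitAddCircle) : v = u + ((dd u v : ℝ) : UnitAddCircle) := by
  rw [coe_dd]; abel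

lemma dd_inj {u x y : UnitAddCircle} (h : dd u x = dd u y) : x = y := by
  rw [eq_add_dd u x, eq_add_dd u y, h]

lemma posOriented_iff {a b c : UnitAddCircle} :
    PosOriented a b c ↔ 0 < dd a b ∧ dd a b < dd a c := by
  constructor
  · rintro ⟨x, y, z, hx, hy, hz, hxy, hyz, hzx⟩
    have hb : dd a b = y - x := dd_eq ⟨by linarith, by linarith⟩ (by
      rw [← hx, ← hy]; rw [sub_eq_add_neg, AddCircle.coe_add, AddCircle.coe_neg,
        ← sub_eq_add_neg])
    have hc : dd a c = z - x := dd_eq ⟨by linarith, by linarith⟩ (by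
      rw [← hx, ← hz]; rw [sub_eq_add_neg, AddCircle.coe_add, AddCircle.coe_neg,
        ← sub_eq_add_neg])
    constructor <;> [rw [hb]; rw [hb, hc]] <;> linarith
  · rintro ⟨h1, h2⟩
    obtain ⟨x, _, hx⟩ := AddCircle.eq_coe_Ico a
    refine ⟨x, x + dd a b, x + dd a c, hx, ?_, ?_, by linarith, by linarith,
      by linarith [(dd_mem a c).2]⟩
    · rw [AddCircle.coe_add, coe_dd, hx]; abel
    · rw [AddCircle.coe_add, coe_dd, hx]; abel

lemma dd_rev {u v : UnitAddCircle} (h : u ≠ v) : dd v u = 1 - dd u v := by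
  have h1 := dd_pos_of_ne h
  have h2 := (dd_mem u v).2
  refine dd_eq ⟨by linarith, by linarith⟩ ?_
  rw [show ((1 - dd u v : ℝ) : UnitAddCircle)
      = ((1:ℝ) : UnitAddCircle) - ((dd u v : ℝ) : UnitAddCircle) from by
        rw [sub_eq_add_neg, AddCircle.coe_add, AddCircle.coe_neg, ← sub_eq_add_neg],
    coe_dd, show ((1:ℝ) : UnitAddCircle) = 0 from AddCircle.coe_period 1]
  abel

lemma pos_asymm {a x b : UnitAddCircle} (h1 : PosOriented a x b) : ¬ PosOriented b x a := by
  rw [posOriented_iff] at h1 ⊢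
  obtain ⟨hp, hpq⟩ := h1
  have hq1 : dd a b < 1 := (dd_mem a b).2
  have hab : a ≠ b := by
    intro he; rw [he] at hp; rw [he, dd_self] at hpq; linarith
  have hbx : dd b x = dd a x - dd a b + 1 := by
    refine dd_eq ⟨by linarith, by linarith⟩ ?_
    rw [show ((dd a x - dd a b + 1 : ℝ) : UnitAddCircle)
        = ((dd a x : ℝ) : UnitAddCircle) - ((dd a b : ℝ) : UnitAddCircle)
          + ((1:ℝ) : UnitAddCircle) from by
        rw [AddCircle.coe_add, sub_eq_add_neg, AddCircle.coe_add, AddCircle.coe_neg,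
          ← sub_eq_add_neg],
      coe_dd, coe_dd, show ((1:ℝ) : UnitAddCircle) = 0 from AddCircle.coe_period 1]
    abel
  rw [dd_rev hab, hbx]
  intro ⟨_, hlt⟩
  linarith

lemma pos_or_neg {a b c : UnitAddCircle} (hab : a ≠ b) (hac : a ≠ c) (hbc : b ≠ c) :
    PosOriented a b c ∨ PosOriented c b a := by
  have hp := dd_pos_of_ne hab
  have hq := dd_pos_of_ne hac
  have hp1 := (dd_mem a b).2
  have hq1 := (dd_mem a c).2
  have hpq : dd a b ≠ dd a c := fun he => hbc (dd_inj he)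
  rcases hpq.lt_or_gt with h1 | h1
  · exact Or.inl (posOriented_iff.2 ⟨hp, h1⟩)
  · right
    rw [posOriented_iff]
    have hcb : dd c b = dd a b - dd a c := by
      refine dd_eq ⟨by linarith, by linarith⟩ ?_
      rw [show ((dd a b - dd a c : ℝ) : UnitAddCircle)
          = ((dd a b : ℝ) : UnitAddCircle) - ((dd a c : ℝ) : UnitAddCircle) from by
          rw [sub_eq_add_neg, AddCircle.coe_add, AddCircle.coe_neg, ← sub_eq_add_neg],
        coe_dd, coe_dd]
      abel
    rw [hcb, dd_rev hac]
    constructor <;> linarith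

lemma symm_OP (h : UnitAddCircle ≃ₜ UnitAddCircle) (hOP : OrientationPreserving h) :
    OrientationPreserving h.symm := by
  intro a b c hpos
  have hd := posOriented_iff.1 hpos
  have hab : a ≠ b := fun he => by rw [he, dd_self] at hd; exact lt_irrefl _ hd.1
  have hac : a ≠ c := by
    intro he; rw [he, dd_self] at hd; linarith [hd.1, hd.2]
  have hbc : b ≠ c := fun he => by rw [he] at hd; exact lt_irrefl _ hd.2
  have hab' : h.symm a ≠ h.symm b := fun he => hab (h.symm.injective he)
  have hac' : h.symm a ≠ h.symm c := fun he => hac (h.symm.injective he)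
  have hbc' : h.symm b ≠ h.symm c := fun he => hbc (h.symm.injective he)
  rcases pos_or_neg hab' hac' hbc' with h1 | h1
  · exact h1
  · exfalso
    have := hOP _ _ _ h1
    rw [h.apply_symm_apply, h.apply_symm_apply, h.apply_symm_apply] at this
    exact pos_asymm hpos this

lemma arc_mapsTo (h : UnitAddCircle ≃ₜ UnitAddCircle) (hOP : OrientationPreserving h)
    {a b : UnitAddCircle} (ha : h a = a) (hb : h b = b) :
    ∀ x ∈ Arc a b, h x ∈ Arc a b := by
  intro x hx
  have := hOP a x b hx
  rwa [ha, hb] at this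

lemma arc_mapsTo_symm (h : UnitAddCircle ≃ₜ UnitAddCircle) (hOP : OrientationPreserving h)
    {a b : UnitAddCircle} (ha : h a = a) (hb : h b = b) :
    ∀ x ∈ Arc a b, h.symm x ∈ Arc a b := by
  intro x hx
  have hxd := posOriented_iff.1 hx
  have haJ : ∀ y : UnitAddCircle, y ∈ Arc a b → y ≠ a := by
    intro y hy he
    have := (posOriented_iff.1 hy).1
    rw [he, dd_self] at this; exact lt_irrefl _ this
  have hbJ : ∀ y : UnitAddCircle, y ∈ Arc a b → y ≠ b := by
    intro y hy he
    have := (posOriented_iff.1 hy).2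
    rw [he] at this; exact lt_irrefl _ this
  have hxa : h.symm x ≠ a := by
    intro he
    have := congrArg h he
    rw [h.apply_symm_apply, ha] at this
    exact haJ x hx this
  have hxb : h.symm x ≠ b := by
    intro he
    have := congrArg h he
    rw [h.apply_symm_apply, hb] at this
    exact hbJ x hx this
  have hab : a ≠ b := by
    intro he
    have h1 := hxd.1
    have h2 := hxd.2
    rw [he, dd_self] at h2
    rw [he] at h1
    linarith
  rcases pos_or_neg (Ne.symm hxa) hab hxb with h1 | h1
  · exact h1
  · exfalso
    have := hOP b (h.symm x) a h1
    rw [ha, hb, h.apply_symm_apply] at this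
    exact pos_asymm hx this

lemma main_case
    (h : UnitAddCircle ≃ₜ UnitAddCircle) (hOP : OrientationPreserving h)
    (a b : UnitAddCircle) (hab : a ≠ b) (ha : h a = a) (hb : h b = b)
    (J : Set UnitAddCircle) (hJ : J = Arc a b)
    (hnofix : ∀ x ∈ J, h x ≠ x)
    (hcase : ∃ p ∈ J, dd a p < dd a (h p)) :
    ∀ p ∈ J, Tendsto (fun n => (⇑h)^[n] p) atTop (𝓝 b) ∧
      Tendsto (fun n => (⇑h.symm)^[n] p) atTop (𝓝 a) := by
  have hL0 : 0 < dd a b := dd_pos_of_ne hab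
  have hL1 : dd a b < 1 := (dd_mem a b).2
  set L := dd a b with hLdef
  have memJ : ∀ x : UnitAddCircle, x ∈ J ↔ (0 < dd a x ∧ dd a x < L) := by
    intro x; rw [hJ]; exact posOriented_iff
  have hmaps : ∀ x ∈ J, h x ∈ J := by
    intro x hx; rw [hJ] at hx ⊢; exact arc_mapsTo h hOP ha hb x hx
  have hmaps' : ∀ x ∈ J, h.symm x ∈ J := by
    intro x hx; rw [hJ] at hx ⊢; exact arc_mapsTo_symm h hOP ha hb x hx
  have haJ : a ∉ J := by
    intro hx
    have := ((memJ a).1 hx).1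
    rw [dd_self] at this; exact lt_irrefl _ this
  have memIoo : ∀ t ∈ Set.Ioo (0:ℝ) L,
      (a + (t : UnitAddCircle)) ∈ J ∧ dd a (a + (t : UnitAddCircle)) = t := by
    intro t ht
    have hdd : dd a (a + (t : UnitAddCircle)) = t :=
      dd_eq ⟨ht.1.le, ht.2.trans hL1⟩ (by rw [add_sub_cancel_left])
    exact ⟨(memJ _).2 (by rw [hdd]; exact ht), hdd⟩
  set g : ℝ → ℝ := fun t => dd a (h (a + (t : UnitAddCircle))) with hgdef
  set g' : ℝ → ℝ := fun t => dd a (h.symm (a + (t : UnitAddCircle))) with hg'def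
  have g_eq : ∀ x ∈ J, g (dd a x) = dd a (h x) := by
    intro x hx
    have hrw : a + ((dd a x : ℝ) : UnitAddCircle) = x := (eq_add_dd a x).symm
    show dd a (h (a + ((dd a x : ℝ) : UnitAddCircle))) = dd a (h x)
    rw [hrw]
  have g'_eq : ∀ x ∈ J, g' (dd a x) = dd a (h.symm x) := by
    intro x hx
    have hrw : a + ((dd a x : ℝ) : UnitAddCircle) = x := (eq_add_dd a x).symm
    show dd a (h.symm (a + ((dd a x : ℝ) : UnitAddCircle))) = dd a (h.symm x)
    rw [hrw]
  have g_mem : ∀ t ∈ Set.Ioo (0:ℝ) L, g t ∈ Set.Ioo (0:ℝ) L := by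
    intro t ht
    have := (memJ _).1 (hmaps _ (memIoo t ht).1)
    exact ⟨this.1, this.2⟩
  have g'_mem : ∀ t ∈ Set.Ioo (0:ℝ) L, g' t ∈ Set.Ioo (0:ℝ) L := by
    intro t ht
    have := (memJ _).1 (hmaps' _ (memIoo t ht).1)
    exact ⟨this.1, this.2⟩
  have g_mono : ∀ s ∈ Set.Ioo (0:ℝ) L, ∀ t ∈ Set.Ioo (0:ℝ) L, s < t → g s < g t := by
    intro s hs t ht hst
    obtain ⟨hxs, hds⟩ := memIoo s hs
    obtain ⟨hxt, hdt⟩ := memIoo t ht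
    have hpos : PosOriented a (a + (s : UnitAddCircle)) (a + (t : UnitAddCircle)) :=
      posOriented_iff.2 (by rw [hds, hdt]; exact ⟨hs.1, hst⟩)
    have hP := hOP _ _ _ hpos
    rw [ha] at hP
    exact (posOriented_iff.1 hP).2
  have g_ne : ∀ t ∈ Set.Ioo (0:ℝ) L, g t ≠ t := by
    intro t ht he
    obtain ⟨hxJ, hdd⟩ := memIoo t ht
    apply hnofix _ hxJ
    have h1 := eq_add_dd a (h (a + (t : UnitAddCircle)))
    rw [show dd a (h (a + (t : UnitAddCircle))) = t from he] at h1
    exact h1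
  have coe_cont : Continuous (fun s : ℝ => a + (s : UnitAddCircle)) :=
    continuous_const.add (AddCircle.continuous_mk' 1)
  have zero_coe : ((0:ℝ) : UnitAddCircle) = 0 := by norm_num
  have g_cont : ∀ t ∈ Set.Ioo (0:ℝ) L, ContinuousAt g t := by
    intro t ht
    have hxJ := (memIoo t ht).1
    have hne : h (a + (t : UnitAddCircle)) - a ≠ ((0:ℝ) : UnitAddCircle) := by
      rw [zero_coe, sub_ne_zero]
      intro he
      exact haJ (he ▸ hmaps _ hxJ)
    have c1 : ContinuousAt (fun s : ℝ => h (a + (s : UnitAddCircle)) - a) t :=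
      ((h.continuous.comp coe_cont).sub continuous_const).continuousAt
    have c2 : ContinuousAt (fun z : UnitAddCircle => ((AddCircle.equivIco 1 0 z : ℝ)))
        (h (a + (t : UnitAddCircle)) - a) :=
      continuous_subtype_val.continuousAt.comp (AddCircle.continuousAt_equivIco 1 0 hne)
    exact ContinuousAt.comp (f := fun s : ℝ => h (a + (s : UnitAddCircle)) - a) c2 c1
  have g'_cont : ∀ t ∈ Set.Ioo (0:ℝ) L, ContinuousAt g' t := by
    intro t ht
    have hxJ := (memIoo t ht).1
    have hne : h.symm (a + (t : UnitAddCircle)) - a ≠ ((0:ℝ) : UnitAddCircle) := by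
      rw [zero_coe, sub_ne_zero]
      intro he
      exact haJ (he ▸ hmaps' _ hxJ)
    have c1 : ContinuousAt (fun s : ℝ => h.symm (a + (s : UnitAddCircle)) - a) t :=
      ((h.symm.continuous.comp coe_cont).sub continuous_const).continuousAt
    have c2 : ContinuousAt (fun z : UnitAddCircle => ((AddCircle.equivIco 1 0 z : ℝ)))
        (h.symm (a + (t : UnitAddCircle)) - a) :=
      continuous_subtype_val.continuousAt.comp (AddCircle.continuousAt_equivIco 1 0 hne)
    exact ContinuousAt.comp (f := fun s : ℝ => h.symm (a + (s : UnitAddCircle)) - a) c2 c1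
  have g_gt : ∀ t ∈ Set.Ioo (0:ℝ) L, t < g t := by
    obtain ⟨p0, hp0J, hp0⟩ := hcase
    have hp0' : dd a p0 ∈ Set.Ioo (0:ℝ) L := (memJ _).1 hp0J
    have hgp0 : dd a p0 < g (dd a p0) := by rw [g_eq _ hp0J]; exact hp0
    intro t ht
    rcases (g_ne t ht).lt_or_gt with hlt | hgt
    · exfalso
      set t0 := dd a p0 with ht0d
      have hne : t ≠ t0 := by
        intro he; rw [he] at hlt; linarith
      rcases hne.lt_or_gt with h1 | h1
      · have hsub : Set.Icc t t0 ⊆ Set.Ioo 0 L := Set.Icc_subset_Ioo ht.1 hp0'.2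
        have hc : ContinuousOn (fun s => g s - s) (Set.Icc t t0) := fun s hs =>
          ((g_cont s (hsub hs)).sub continuousAt_id).continuousWithinAt
        have hm : (0:ℝ) ∈ Set.Icc (g t - t) (g t0 - t0) := ⟨by linarith, by linarith⟩
        obtain ⟨u, hu, hu0⟩ := intermediate_value_Icc h1.le hc hm
        exact g_ne u (hsub hu) (by dsimp at hu0; linarith)
      · have hsub : Set.Icc t0 t ⊆ Set.Ioo 0 L := Set.Icc_subset_Ioo hp0'.1 ht.2
        have hc : ContinuousOn (fun s => g s - s) (Set.Icc t0 t) := fun s hs =>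
          ((g_cont s (hsub hs)).sub continuousAt_id).continuousWithinAt
        have hm : (0:ℝ) ∈ Set.Icc (g t - t) (g t0 - t0) := ⟨by linarith, by linarith⟩
        obtain ⟨u, hu, hu0⟩ := intermediate_value_Icc' h1.le hc hm
        exact g_ne u (hsub hu) (by dsimp at hu0; linarith)
    · exact hgt
  have gg' : ∀ t ∈ Set.Ioo (0:ℝ) L, g (g' t) = t := by
    intro t ht
    obtain ⟨hxJ, hdd⟩ := memIoo t ht
    calc g (g' t) = dd a (h (h.symm (a + (t : UnitAddCircle)))) := g_eq _ (hmaps' _ hxJ)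
    _ = t := by rw [h.apply_symm_apply]; exact hdd
  have g'_lt : ∀ t ∈ Set.Ioo (0:ℝ) L, g' t < t := by
    intro t ht
    have hg't := g'_mem t ht
    rcases lt_trichotomy (g' t) t with h1 | h1 | h1
    · exact h1
    · exfalso
      have h2 := gg' t ht
      rw [h1] at h2
      exact g_ne t ht h2
    · exfalso
      have h2 : g t < g (g' t) := g_mono t ht (g' t) hg't h1
      rw [gg' t ht] at h2
      linarith [g_gt t ht]
  intro p hpJ
  have ht0' : dd a p ∈ Set.Ioo (0:ℝ) L := (memJ _).1 hpJ
  set t0 := dd a p with ht0d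
  constructor
  · -- forward orbit tends to b
    set t : ℕ → ℝ := fun n => g^[n] t0 with htd
    have t_succ : ∀ n, t (n + 1) = g (t n) := fun n => Function.iterate_succ_apply' g n t0
    have t_mem : ∀ n, t n ∈ Set.Ioo (0:ℝ) L := by
      intro n; induction n with
      | zero => exact ht0'
      | succ n ih => rw [t_succ n]; exact g_mem _ ih
    have t_iter : ∀ n, (⇑h)^[n] p = a + ((t n : ℝ) : UnitAddCircle) := by
      intro n; induction n with
      | zero => exact eq_add_dd a p
      | succ n ih =>
          rw [Function.iterate_succ_apply', ih, t_succ n]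
          exact eq_add_dd a _
    have t_mono : Monotone t := monotone_nat_of_le_succ fun n => by
      rw [t_succ n]; exact (g_gt _ (t_mem n)).le
    have t_bdd : BddAbove (Set.range t) := ⟨L, by rintro _ ⟨n, rfl⟩; exact (t_mem n).2.le⟩
    have t_tend : Tendsto t atTop (𝓝 (⨆ n, t n)) := tendsto_atTop_ciSup t_mono t_bdd
    have hle : (⨆ n, t n) ≤ L := ciSup_le fun n => (t_mem n).2.le
    have hge : t0 ≤ (⨆ n, t n) := le_ciSup t_bdd 0
    have hℓL : (⨆ n, t n) = L := by
      by_contra hne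
      have hlt : (⨆ n, t n) < L := lt_of_le_of_ne hle hne
      have hIoo : (⨆ n, t n) ∈ Set.Ioo (0:ℝ) L := ⟨lt_of_lt_of_le ht0'.1 hge, hlt⟩
      have h1 : Tendsto (fun n => g (t n)) atTop (𝓝 (g (⨆ n, t n))) :=
        (g_cont _ hIoo).tendsto.comp t_tend
      have h2 : Tendsto (fun n => t (n + 1)) atTop (𝓝 (⨆ n, t n)) :=
        t_tend.comp (tendsto_add_atTop_nat 1)
      have h3 : (fun n => g (t n)) = fun n => t (n + 1) := funext fun n => (t_succ n).symm
      rw [h3] at h1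
      have := tendsto_nhds_unique h1 h2
      exact absurd this (ne_of_gt (g_gt _ hIoo))
    have hcoe : Tendsto (fun n => a + ((t n : ℝ) : UnitAddCircle)) atTop
        (𝓝 (a + ((L : ℝ) : UnitAddCircle))) :=
      (coe_cont.tendsto L).comp (hℓL ▸ t_tend)
    have hbL : a + ((L : ℝ) : UnitAddCircle) = b := (eq_add_dd a b).symm
    rw [hbL] at hcoe
    exact hcoe.congr fun n => (t_iter n).symm
  · -- backward orbit tends to a
    set s : ℕ → ℝ := fun n => g'^[n] t0 with hsd
    have s_succ : ∀ n, s (n + 1) = g' (s n) := fun n => Function.iterate_succ_apply' g' n t0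
    have s_mem : ∀ n, s n ∈ Set.Ioo (0:ℝ) L := by
      intro n; induction n with
      | zero => exact ht0'
      | succ n ih => rw [s_succ n]; exact g'_mem _ ih
    have s_iter : ∀ n, (⇑h.symm)^[n] p = a + ((s n : ℝ) : UnitAddCircle) := by
      intro n; induction n with
      | zero => exact eq_add_dd a p
      | succ n ih =>
          rw [Function.iterate_succ_apply', ih, s_succ n]
          exact eq_add_dd a _
    have s_anti : Antitone s := antitone_nat_of_succ_le fun n => by
      rw [s_succ n]; exact (g'_lt _ (s_mem n)).le
    have s_bdd : BddBelow (Set.range s) := ⟨0, by rintro _ ⟨n, rfl⟩; exact (s_mem n).1.le⟩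
    have s_tend : Tendsto s atTop (𝓝 (⨅ n, s n)) := tendsto_atTop_ciInf s_anti s_bdd
    have hge : (0:ℝ) ≤ (⨅ n, s n) := le_ciInf fun n => (s_mem n).1.le
    have hle : (⨅ n, s n) ≤ t0 := ciInf_le s_bdd 0
    have hℓ0 : (⨅ n, s n) = 0 := by
      by_contra hne
      have hlt : 0 < (⨅ n, s n) := lt_of_le_of_ne hge (Ne.symm hne)
      have hIoo : (⨅ n, s n) ∈ Set.Ioo (0:ℝ) L := ⟨hlt, lt_of_le_of_lt hle ht0'.2⟩
      have h1 : Tendsto (fun n => g' (s n)) atTop (𝓝 (g' (⨅ n, s n))) :=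
        (g'_cont _ hIoo).tendsto.comp s_tend
      have h2 : Tendsto (fun n => s (n + 1)) atTop (𝓝 (⨅ n, s n)) :=
        s_tend.comp (tendsto_add_atTop_nat 1)
      have h3 : (fun n => g' (s n)) = fun n => s (n + 1) := funext fun n => (s_succ n).symm
      rw [h3] at h1
      have := tendsto_nhds_unique h1 h2
      exact absurd this (ne_of_lt (g'_lt _ hIoo))
    have hcoe : Tendsto (fun n => a + ((s n : ℝ) : UnitAddCircle)) atTop
        (𝓝 (a + ((0 : ℝ) : UnitAddCircle))) :=
      (coe_cont.tendsto 0).comp (hℓ0 ▸ s_tend)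
    have ha0 : a + ((0 : ℝ) : UnitAddCircle) = a := by rw [zero_coe, add_zero]
    rw [ha0] at hcoe
    exact hcoe.congr fun n => (s_iter n).symm

theorem dynamics_on_fixed_point_free_arc
    (h : UnitAddCircle ≃ₜ UnitAddCircle) (hOP : OrientationPreserving h)
    (a b : UnitAddCircle) (hab : a ≠ b) (ha : h a = a) (hb : h b = b)
    (J : Set UnitAddCircle) (hJ : J = Arc a b) (hJne : J.Nonempty)
    (hnofix : ∀ x ∈ J, h x ≠ x) :
    h '' J = J ∧
      Xor'
        (∀ p ∈ J, Tendsto (fun n => (⇑h)^[n] p) atTop (𝓝 b) ∧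
          Tendsto (fun n => (⇑h.symm)^[n] p) atTop (𝓝 a))
        (∀ p ∈ J, Tendsto (fun n => (⇑h)^[n] p) atTop (𝓝 a) ∧
          Tendsto (fun n => (⇑h.symm)^[n] p) atTop (𝓝 b)) := by
  have hmaps : ∀ x ∈ J, h x ∈ J := by
    intro x hx; rw [hJ] at hx ⊢; exact arc_mapsTo h hOP ha hb x hx
  have hmaps' : ∀ x ∈ J, h.symm x ∈ J := by
    intro x hx; rw [hJ] at hx ⊢; exact arc_mapsTo_symm h hOP ha hb x hx
  have himg : h '' J = J := by
    apply Set.eq_of_subset_of_subset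
    · rintro _ ⟨x, hx, rfl⟩; exact hmaps x hx
    · intro x hx
      exact ⟨h.symm x, hmaps' x hx, h.apply_symm_apply x⟩
  refine ⟨himg, ?_⟩
  obtain ⟨p0, hp0J⟩ := hJne
  have hOP' : OrientationPreserving h.symm := symm_OP h hOP
  have ha' : h.symm a = a := by
    have := congrArg h.symm ha
    rw [h.symm_apply_apply] at this
    exact this.symm
  have hb' : h.symm b = b := by
    have := congrArg h.symm hb
    rw [h.symm_apply_apply] at this
    exact this.symm
  have hnofix' : ∀ x ∈ J, h.symm x ≠ x := by
    intro x hx he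
    apply hnofix x hx
    have := congrArg h he
    rw [h.apply_symm_apply] at this
    exact this.symm
  have hdne : dd a p0 ≠ dd a (h p0) := by
    intro he
    exact hnofix p0 hp0J (dd_inj he.symm)
  rcases hdne.lt_or_gt with hc | hc
  · -- case: points move counterclockwise (towards b)
    have hP := main_case h hOP a b hab ha hb J hJ hnofix ⟨p0, hp0J, hc⟩
    left
    refine ⟨hP, ?_⟩
    intro hQ
    have h1 := (hP p0 hp0J).1
    have h2 := (hQ p0 hp0J).1
    exact hab (tendsto_nhds_unique h2 h1)
  · -- case: points move clockwise (towards a); apply main_case to h.symm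
    have hcase' : ∃ p ∈ J, dd a p < dd a (h.symm p) := by
      refine ⟨h p0, hmaps p0 hp0J, ?_⟩
      rwa [h.symm_apply_apply]
    have hQ' := main_case h.symm hOP' a b hab ha' hb' J hJ hnofix' hcase'
    simp only [Homeomorph.symm_symm] at hQ'
    have hQ : ∀ p ∈ J, Tendsto (fun n => (⇑h)^[n] p) atTop (𝓝 a) ∧
        Tendsto (fun n => (⇑h.symm)^[n] p) atTop (𝓝 b) :=
      fun p hp => ⟨(hQ' p hp).2, (hQ' p hp).1⟩
    right
    refine ⟨hQ, ?_⟩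
    intro hP
    have h1 := (hP p0 hp0J).1
    have h2 := (hQ p0 hp0J).1
    exact hab (tendsto_nhds_unique h2 h1)
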